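/- Let K ⊆ R^β be a submodule, ℓ ≥ 1, and let U be a β×β matrix over R. Let L be the smallest submodule of R^β with K ⊆ L^{[p^ℓ]}. Then U·L (the submodule generated by {U·w : w ∈ L}) is the smallest submodule L'' of R^β such that U^{[p^ℓ]}·K ⊆ (L'')^{[p^ℓ]}, where U^{[p^ℓ]}·K is the submodule generated by {U^{[p^ℓ]}·v : v ∈ K}. In other words, I_ℓ(U^{[p^ℓ]}·K) = U·I_ℓ(K). -/

import Mathlib

/-- The bracket power `L^{[q]}` of a submodule `L ⊆ T^β`: the submodule generated by the
entrywise `q`-th powers `v^{[q]}` of the vectors `v ∈ L`. -/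
def bracketPower {T : Type*} [CommRing T] {β : ℕ}
    (q : ℕ) (L : Submodule T (Fin β → T)) : Submodule T (Fin β → T) :=
  Submodule.span T ((fun v : Fin β → T => fun i => (v i) ^ q) '' (L : Set (Fin β → T)))

namespace IeAux

/-- Abstract "Frobenius decomposition" data for a commutative ring `R` and exponent `q`:
a family of additive maps `c t : R →+ R` and elements `b t : R` such that
`c t ((a^q) * x) = a * c t x` and every `x` decomposes as `x = ∑ (c t x)^q * b t`
(over any large enough finite index set). -/
structure PhiDecomp (R : Type*) [CommRing R] (q : ℕ) where
  ι : Type*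
  c : ι → R →+ R
  b : ι → R
  c_semilinear : ∀ (t : ι) (a x : R), c t (a ^ q * x) = a * c t x
  sum_eq : ∀ x : R, ∃ T : Finset ι, ∀ T' : Finset ι, T ⊆ T' →
      ∑ t ∈ T', (c t x) ^ q * b t = x

variable {R : Type*} [CommRing R] {q β : ℕ}

theorem PhiDecomp.exists_common (D : PhiDecomp R q) (x : Fin β → R) :
    ∃ T : Finset D.ι, ∀ i, ∑ t ∈ T, (D.c t (x i)) ^ q * D.b t = x i := by
  classical
  choose T hT using fun i => D.sum_eq (x i)
  exact ⟨Finset.univ.biUnion T,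
    fun i => hT i _ (Finset.subset_biUnion_of_mem T (Finset.mem_univ i))⟩

theorem PhiDecomp.mem_bracketPower (D : PhiDecomp R q)
    (W : Submodule R (Fin β → R)) (x : Fin β → R) :
    x ∈ bracketPower q W ↔ ∀ t, (fun i => D.c t (x i)) ∈ W := by
  constructor
  · intro hx
    unfold bracketPower at hx
    induction hx using Submodule.span_induction with
    | mem y hy =>
      obtain ⟨w, hw, rfl⟩ := hy
      intro t
      show (fun i => D.c t ((w i) ^ q)) ∈ W
      have he : (fun i => D.c t ((w i) ^ q)) = (D.c t 1) • w := by
        funext i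
        rw [Pi.smul_apply, smul_eq_mul, ← mul_one ((w i) ^ q), D.c_semilinear, mul_comm]
      rw [he]
      exact W.smul_mem _ hw
    | zero =>
      intro t
      have : (fun i => D.c t ((0 : Fin β → R) i)) = (0 : Fin β → R) := by
        funext i; simp
      rw [this]; exact W.zero_mem
    | add a b _ _ pa pb =>
      intro t
      have : (fun i => D.c t ((a + b) i)) =
          (fun i => D.c t (a i)) + fun i => D.c t (b i) := by
        funext i; simp
      rw [this]; exact W.add_mem (pa t) (pb t)
    | smul s y _ py =>
      intro t
      obtain ⟨T, hT⟩ := D.exists_common y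
      have key : (fun i => D.c t ((s • y) i)) =
          ∑ t' ∈ T, (D.c t (s * D.b t')) • fun i => D.c t' (y i) := by
        funext i
        rw [Finset.sum_apply]
        have h1 : (s • y) i = ∑ t' ∈ T, (D.c t' (y i)) ^ q * (s * D.b t') := by
          conv_lhs => rw [Pi.smul_apply, smul_eq_mul, ← hT i, Finset.mul_sum]
          exact Finset.sum_congr rfl fun t' _ => by ring
        rw [h1, map_sum]
        exact Finset.sum_congr rfl fun t' _ => by
          rw [D.c_semilinear, Pi.smul_apply, smul_eq_mul]; ring
      rw [key]
      exact Submodule.sum_mem _ fun t' _ => Submodule.smul_mem _ _ (py t')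
  · intro h
    obtain ⟨T, hT⟩ := D.exists_common x
    have hx : x = ∑ t ∈ T, (D.b t) • fun i => (D.c t (x i)) ^ q := by
      funext i
      rw [Finset.sum_apply, ← hT i]
      exact Finset.sum_congr rfl fun t _ => by
        rw [Pi.smul_apply, smul_eq_mul]; ring
    rw [hx]
    exact Submodule.sum_mem _ fun t _ =>
      Submodule.smul_mem _ _ (Submodule.subset_span ⟨_, h t, rfl⟩)

theorem PhiDecomp.isLeast_map (D : PhiDecomp R q)
    (U : Matrix (Fin β) (Fin β) R) (K' L : Submodule R (Fin β → R))
    (hL : IsLeast {W : Submodule R (Fin β → R) | K' ≤ bracketPower q W} L) :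
    IsLeast {W : Submodule R (Fin β → R) |
        Submodule.map (Matrix.mulVecLin (U.map (· ^ q))) K' ≤ bracketPower q W}
      (Submodule.map (Matrix.mulVecLin U) L) := by
  have key : ∀ (t : D.ι) (v : Fin β → R),
      (fun i => D.c t ((Matrix.mulVecLin (U.map (· ^ q))) v i)) =
        Matrix.mulVecLin U (fun i => D.c t (v i)) := by
    intro t v
    funext i
    have h1 : (Matrix.mulVecLin (U.map (· ^ q))) v i = ∑ k, (U i k) ^ q * v k := by
      simp [Matrix.mulVecLin_apply, Matrix.mulVec, dotProduct, Matrix.map_apply]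
    have h2 : (Matrix.mulVecLin U) (fun i => D.c t (v i)) i = ∑ k, U i k * D.c t (v k) := by
      simp [Matrix.mulVecLin_apply, Matrix.mulVec, dotProduct]
    rw [h1, h2, map_sum]
    exact Finset.sum_congr rfl fun k _ => D.c_semilinear t _ _
  constructor
  · rintro _ ⟨v, hv, rfl⟩
    rw [D.mem_bracketPower]
    intro t
    rw [key]
    exact Submodule.mem_map_of_mem ((D.mem_bracketPower L v).mp (hL.1 hv) t)
  · intro W hW
    have h1 : K' ≤ bracketPower q (Submodule.comap (Matrix.mulVecLin U) W) := by
      intro v hv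
      rw [D.mem_bracketPower]
      intro t
      have h2 : (Matrix.mulVecLin (U.map (· ^ q))) v ∈ bracketPower q W :=
        hW (Submodule.mem_map_of_mem hv)
      rw [D.mem_bracketPower] at h2
      have h3 := h2 t
      rw [key] at h3
      exact h3
    have h4 : L ≤ Submodule.comap (Matrix.mulVecLin U) W := hL.2 h1
    rintro _ ⟨w, hw, rfl⟩
    exact h4 hw

/-! ### Construction of a `PhiDecomp` for a polynomial ring over a field -/

section Construction

open MvPolynomial

variable {K : Type*} [Field K] {n q : ℕ}

/-- A set-theoretic section of `φK`, defined on its field range. -/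
noncomputable def sec (φK : K →+* K) (v : φK.fieldRange) : K :=
  (RingHom.mem_fieldRange.mp v.2).choose

lemma sec_spec (φK : K →+* K) (v : φK.fieldRange) : φK (sec φK v) = v :=
  (RingHom.mem_fieldRange.mp v.2).choose_spec

variable (φK : K →+* K)

/-- A basis of `K` as a vector space over the range of `φK`. -/
noncomputable def kb : Module.Basis (Module.Basis.ofVectorSpaceIndex φK.fieldRange K) φK.fieldRange K :=
  Module.Basis.ofVectorSpace φK.fieldRange K

/-- Index type for the basis at the level of the coefficient field. -/
abbrev ιK := Module.Basis.ofVectorSpaceIndex φK.fieldRange K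

/-- "Components" of an element of `K` with respect to the basis `kb`, pulled back
through `φK`. -/
noncomputable def cK (t : ιK φK) (u : K) : K :=
  sec φK ((kb φK).repr u t)

lemma cK_spec (t : ιK φK) (u : K) : φK (cK φK t u) = ((kb φK).repr u t : K) :=
  sec_spec φK _

lemma cK_zero (t : ιK φK) : cK φK t 0 = 0 :=
  φK.injective (by rw [cK_spec, map_zero]; simp)

lemma cK_add (t : ιK φK) (u v : K) : cK φK t (u + v) = cK φK t u + cK φK t v := by
  apply φK.injective
  rw [map_add, cK_spec, cK_spec, cK_spec, map_add]
  push_cast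
  rfl

lemma cK_semilinear (t : ιK φK) (a u : K) : cK φK t (φK a * u) = a * cK φK t u := by
  apply φK.injective
  rw [map_mul, cK_spec, cK_spec]
  have hmem : φK a ∈ φK.fieldRange := ⟨a, rfl⟩
  have h1 : φK a * u = (⟨φK a, hmem⟩ : φK.fieldRange) • u := rfl
  rw [h1, map_smul, Finsupp.smul_apply, smul_eq_mul]
  push_cast
  rfl

lemma cK_vanish (t : ιK φK) (u : K) (h : (kb φK).repr u t = 0) : cK φK t u = 0 :=
  φK.injective (by rw [cK_spec, h]; simp)

lemma cK_sum (u : K) (S : Finset (ιK φK)) (hS : ((kb φK).repr u).support ⊆ S) :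
    ∑ t ∈ S, φK (cK φK t u) * kb φK t = u := by
  have h1 : ∀ t ∈ S, φK (cK φK t u) * kb φK t = ((kb φK).repr u t : K) * kb φK t :=
    fun t _ => by rw [cK_spec]
  rw [Finset.sum_congr rfl h1,
    ← Finset.sum_subset hS (fun t _ ht => by
      rw [Finsupp.notMem_support_iff.mp ht]; simp)]
  have h2 := (kb φK).linearCombination_repr u
  rw [Finsupp.linearCombination_apply, Finsupp.sum] at h2
  exact h2

/-- Componentwise division of exponents by `q`. -/
noncomputable def mdiv (q : ℕ) (m : Fin n →₀ ℕ) : Fin n →₀ ℕ :=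
  Finsupp.mapRange (· / q) (by simp) m

lemma mdiv_apply (m : Fin n →₀ ℕ) (i : Fin n) : mdiv q m i = m i / q :=
  Finsupp.mapRange_apply

/-- The exponent `Finsupp` attached to a remainder vector `a`. -/
noncomputable def afin (a : Fin n → Fin q) : Fin n →₀ ℕ :=
  Finsupp.equivFunOnFinite.symm (fun i => (a i : ℕ))

lemma afin_apply (a : Fin n → Fin q) (i : Fin n) : afin a i = (a i : ℕ) := rfl

open scoped Classical in
/-- One term in the component map. -/
noncomputable def pterm (a : Fin n → Fin q) (t : ιK φK) (m : Fin n →₀ ℕ) (u : K) :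
    MvPolynomial (Fin n) K :=
  if ∀ i, m i % q = (a i : ℕ) then monomial (mdiv q m) (cK φK t u) else 0

lemma pterm_zero (a : Fin n → Fin q) (t : ιK φK) (m : Fin n →₀ ℕ) :
    pterm φK a t m 0 = 0 := by
  unfold pterm
  rw [cK_zero]
  split <;> simp

lemma pterm_add (a : Fin n → Fin q) (t : ιK φK) (m : Fin n →₀ ℕ) (u v : K) :
    pterm φK a t m (u + v) = pterm φK a t m u + pterm φK a t m v := by
  unfold pterm
  rw [cK_add]
  split <;> simp

/-- The component maps on the polynomial ring. -/
noncomputable def ccc (a : Fin n → Fin q) (t : ιK φK) (f : MvPolynomial (Fin n) K) :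
    MvPolynomial (Fin n) K :=
  ∑ m ∈ f.support, pterm φK a t m (coeff m f)

lemma ccc_eq_sum (a : Fin n → Fin q) (t : ιK φK) (f : MvPolynomial (Fin n) K)
    (S : Finset (Fin n →₀ ℕ)) (hS : f.support ⊆ S) :
    ccc φK a t f = ∑ m ∈ S, pterm φK a t m (coeff m f) := by
  unfold ccc
  exact Finset.sum_subset hS fun m _ hm => by
    rw [MvPolynomial.notMem_support_iff.mp hm, pterm_zero]

lemma ccc_zero (a : Fin n → Fin q) (t : ιK φK) : ccc φK a t 0 = 0 := by
  unfold ccc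
  simp

lemma ccc_add (a : Fin n → Fin q) (t : ιK φK) (f g : MvPolynomial (Fin n) K) :
    ccc φK a t (f + g) = ccc φK a t f + ccc φK a t g := by
  classical
  rw [ccc_eq_sum φK a t (f + g) ((f + g).support ∪ (f.support ∪ g.support))
      Finset.subset_union_left,
    ccc_eq_sum φK a t f ((f + g).support ∪ (f.support ∪ g.support))
      (Finset.subset_union_left.trans Finset.subset_union_right),
    ccc_eq_sum φK a t g ((f + g).support ∪ (f.support ∪ g.support))
      (Finset.subset_union_right.trans Finset.subset_union_right),
    ← Finset.sum_add_distrib]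
  exact Finset.sum_congr rfl fun m _ => by rw [coeff_add, pterm_add]

lemma ccc_monomial (a : Fin n → Fin q) (t : ιK φK) (m : Fin n →₀ ℕ) (u : K) :
    ccc φK a t (monomial m u) = pterm φK a t m u := by
  classical
  rw [ccc_eq_sum φK a t _ {m} support_monomial_subset, Finset.sum_singleton]
  congr 1
  simp [coeff_monomial]

lemma ccc_semilinear (hq : 0 < q) (hφK : ∀ a : K, φK a = a ^ q)
    (φR : MvPolynomial (Fin n) K →+* MvPolynomial (Fin n) K)
    (hφR : ∀ f, φR f = f ^ q)
    (a : Fin n → Fin q) (t : ιK φK) (g f : MvPolynomial (Fin n) K) :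
    ccc φK a t (g ^ q * f) = g * ccc φK a t f := by
  classical
  rw [← hφR g]
  induction g using MvPolynomial.induction_on' with
  | monomial m1 u1 =>
    induction f using MvPolynomial.induction_on' with
    | monomial m2 u2 =>
      rw [hφR, monomial_pow, monomial_mul, ccc_monomial, ccc_monomial]
      unfold pterm
      have hcond : (∀ i, (q • m1 + m2) i % q = (a i : ℕ)) ↔ (∀ i, m2 i % q = (a i : ℕ)) := by
        apply forall_congr'
        intro i
        rw [Finsupp.add_apply, Finsupp.smul_apply, smul_eq_mul, Nat.mul_add_mod]
      by_cases hc : ∀ i, m2 i % q = (a i : ℕ)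
      · rw [if_pos hc, if_pos (hcond.mpr hc)]
        have hdiv : mdiv q (q • m1 + m2) = m1 + mdiv q m2 := by
          ext i
          rw [mdiv_apply, Finsupp.add_apply, Finsupp.smul_apply, smul_eq_mul,
            Nat.mul_add_div hq, Finsupp.add_apply, mdiv_apply]
        have hck : cK φK t (u1 ^ q * u2) = u1 * cK φK t u2 := by
          rw [← hφK, cK_semilinear]
        rw [hdiv, hck, monomial_mul]
      · rw [if_neg hc, if_neg (fun h => hc (hcond.mp h)), mul_zero]
    | add f1 f2 ih1 ih2 =>
      rw [mul_add, ccc_add, ih1, ih2, ccc_add, mul_add]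
  | add g1 g2 ih1 ih2 =>
    rw [map_add, add_mul, ccc_add, ih1, ih2, add_mul]

open scoped Classical in
/-- The finite set of basis indices appearing in the coefficients of `f`. -/
noncomputable def vset (f : MvPolynomial (Fin n) K) : Finset (ιK φK) :=
  f.support.biUnion fun m => ((kb φK).repr (coeff m f)).support

lemma ccc_vanish (f : MvPolynomial (Fin n) K) (t : ιK φK) (ht : t ∉ vset φK f)
    (a : Fin n → Fin q) : ccc φK a t f = 0 := by
  classical
  unfold ccc
  apply Finset.sum_eq_zero
  intro m hm
  have h1 : (kb φK).repr (coeff m f) t = 0 := by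
    by_contra h
    apply ht
    unfold vset
    exact Finset.mem_biUnion.mpr ⟨m, hm, Finsupp.mem_support_iff.mpr h⟩
  unfold pterm
  rw [cK_vanish φK t _ h1]
  split <;> simp

lemma ccc_sum (hq : 0 < q) (hφK : ∀ a : K, φK a = a ^ q)
    (φR : MvPolynomial (Fin n) K →+* MvPolynomial (Fin n) K)
    (hφR : ∀ f, φR f = f ^ q) (f : MvPolynomial (Fin n) K) :
    ∃ T0 : Finset (ιK φK), ∀ S : Finset (ιK φK), T0 ⊆ S →
      ∑ a : Fin n → Fin q, ∑ t ∈ S,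
        φR (ccc φK a t f) * monomial (afin a) (kb φK t) = f := by
  classical
  induction f using MvPolynomial.induction_on' with
  | monomial m u =>
    refine ⟨((kb φK).repr u).support, fun S hS => ?_⟩
    have ha0lt : ∀ i, m i % q < q := fun i => Nat.mod_lt _ hq
    set a0 : Fin n → Fin q := fun i => ⟨m i % q, ha0lt i⟩ with ha0
    have hmain : ∀ a : Fin n → Fin q, a ≠ a0 →
        ∑ t ∈ S, φR (ccc φK a t (monomial m u)) * monomial (afin a) (kb φK t) = 0 := by
      intro a ha
      apply Finset.sum_eq_zero
      intro t _
      have hc : ¬ (∀ i, m i % q = (a i : ℕ)) := by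
        intro h
        apply ha
        funext i
        exact Fin.val_injective (h i).symm
      rw [ccc_monomial]
      unfold pterm
      rw [if_neg hc, map_zero, zero_mul]
    rw [Fintype.sum_eq_single a0 hmain]
    have hstep : ∀ t ∈ S, φR (ccc φK a0 t (monomial m u)) * monomial (afin a0) (kb φK t)
        = monomial m (φK (cK φK t u) * kb φK t) := by
      intro t _
      rw [ccc_monomial]
      unfold pterm
      have hexp : q • mdiv q m + afin a0 = m := by
        ext i
        rw [Finsupp.add_apply, Finsupp.smul_apply, smul_eq_mul, mdiv_apply, afin_apply]
        exact Nat.div_add_mod (m i) q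
      rw [if_pos (fun i => rfl), hφR, monomial_pow, monomial_mul, hexp, ← hφK]
    rw [Finset.sum_congr rfl hstep, ← map_sum (monomial m), cK_sum φK u S hS]
  | add f g ihf ihg =>
    obtain ⟨T1, h1⟩ := ihf
    obtain ⟨T2, h2⟩ := ihg
    refine ⟨T1 ∪ T2, fun S hS => ?_⟩
    have e : ∀ (a : Fin n → Fin q) (t : ιK φK),
        φR (ccc φK a t (f + g)) * monomial (afin a) (kb φK t)
          = φR (ccc φK a t f) * monomial (afin a) (kb φK t)
            + φR (ccc φK a t g) * monomial (afin a) (kb φK t) := by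
      intro a t; rw [ccc_add, map_add, add_mul]
    simp only [e, Finset.sum_add_distrib]
    rw [h1 S (Finset.subset_union_left.trans hS), h2 S (Finset.subset_union_right.trans hS)]

/-- The Frobenius decomposition for a multivariate polynomial ring over a field. -/
noncomputable def mvDecomp (hq : 0 < q) (hφK : ∀ a : K, φK a = a ^ q)
    (φR : MvPolynomial (Fin n) K →+* MvPolynomial (Fin n) K)
    (hφR : ∀ f, φR f = f ^ q) :
    PhiDecomp (MvPolynomial (Fin n) K) q where
  ι := (Fin n → Fin q) × (ιK φK)
  c j := AddMonoidHom.mk' (ccc φK j.1 j.2) (ccc_add φK j.1 j.2)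
  b j := monomial (afin j.1) (kb φK j.2)
  c_semilinear j g f := ccc_semilinear φK hq hφK φR hφR j.1 j.2 g f
  sum_eq f := by
    classical
    obtain ⟨T0, hT0⟩ := ccc_sum φK hq hφK φR hφR f
    refine ⟨Finset.univ ×ˢ (T0 ∪ vset φK f), fun T' hT' => ?_⟩
    have hzero : ∀ j ∈ T', j ∉ Finset.univ ×ˢ (T0 ∪ vset φK f) →
        (ccc φK j.1 j.2 f) ^ q * monomial (afin j.1) (kb φK j.2) = 0 := by
      intro j _ hj
      have hj2 : j.2 ∉ T0 ∪ vset φK f := by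
        intro h
        exact hj (Finset.mem_product.mpr ⟨Finset.mem_univ _, h⟩)
      have hj3 : j.2 ∉ vset φK f := fun h => hj2 (Finset.mem_union_right _ h)
      rw [ccc_vanish φK f j.2 hj3 j.1, zero_pow hq.ne', zero_mul]
    show ∑ j ∈ T', (ccc φK j.1 j.2 f) ^ q * monomial (afin j.1) (kb φK j.2) = f
    rw [← Finset.sum_subset hT' hzero, Finset.sum_product]
    have := hT0 (T0 ∪ vset φK f) Finset.subset_union_left
    calc ∑ a : Fin n → Fin q, ∑ t ∈ T0 ∪ vset φK f,
          (ccc φK a t f) ^ q * monomial (afin a) (kb φK t)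
        = ∑ a : Fin n → Fin q, ∑ t ∈ T0 ∪ vset φK f,
          φR (ccc φK a t f) * monomial (afin a) (kb φK t) := by
          exact Finset.sum_congr rfl fun a _ => Finset.sum_congr rfl fun t _ => by
            rw [hφR]
      _ = f := this

end Construction

end IeAux

/-- **Statement 6.** Over `R = K[x₁,…,xₙ]` with `K` a field of prime characteristic `p`:
let `K' ⊆ R^β` be a submodule, `ℓ ≥ 1`, `U` a `β×β` matrix over `R`, and let `L` be the
smallest submodule with `K' ⊆ L^{[p^ℓ]}`.  Then `U·L` is the smallest submodule `L''` with
`U^{[p^ℓ]}·K' ⊆ (L'')^{[p^ℓ]}`; i.e. `I_ℓ(U^{[p^ℓ]}·K') = U·I_ℓ(K')`. -/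
theorem Ie_matrix_mul
    {K : Type*} [Field K] {p n β : ℕ} (hp : p.Prime) [CharP K p]
    (ℓ : ℕ) (hℓ : 1 ≤ ℓ)
    (U : Matrix (Fin β) (Fin β) (MvPolynomial (Fin n) K))
    (K' L : Submodule (MvPolynomial (Fin n) K) (Fin β → MvPolynomial (Fin n) K))
    (hL : IsLeast {W : Submodule (MvPolynomial (Fin n) K) (Fin β → MvPolynomial (Fin n) K) |
        K' ≤ bracketPower (p ^ ℓ) W} L) :
    IsLeast {W : Submodule (MvPolynomial (Fin n) K) (Fin β → MvPolynomial (Fin n) K) |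
        Submodule.map (Matrix.mulVecLin (U.map (· ^ p ^ ℓ))) K' ≤ bracketPower (p ^ ℓ) W}
      (Submodule.map (Matrix.mulVecLin U) L) := by
  haveI : Fact p.Prime := ⟨hp⟩
  have hq : 0 < p ^ ℓ := pow_pos hp.pos ℓ
  exact (IeAux.mvDecomp (iterateFrobenius K p ℓ) hq
      (fun a => iterateFrobenius_def p ℓ a)
      (iterateFrobenius (MvPolynomial (Fin n) K) p ℓ)
      (fun f => iterateFrobenius_def p ℓ f)).isLeast_map U K' L hL
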